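/- Let m ≥ 1 be an integer, let p ∈ (0, 1/2] and q = 1 − p, and let t ∈ [0, 1). Let (ξ_i)_{i≥1} be i.i.d. random variables with P(ξ_i = 1) = p and P(ξ_i = −1) = q, let S_n = ξ_1 + ⋯ + ξ_n, and let T = inf{n ≥ 1 : S_n = −m} (which is finite almost surely since p ≤ 1/2, and T + m is even almost surely). Let (Y_i)_{i≥1} be i.i.d. random variables uniformly distributed on [0,1], independent of (ξ_i)_{i≥1}, and set Z_m = max{Y_i : 1 ≤ i ≤ (T+m)/2}. Then P[Z_m ≤ t] = (qt)^m · ∑_{k=0}^∞ [(m/2)_k ((m+1)/2)_k / ((m+1)_k · k!)] (4pqt)^k, i.e. P[Z_m ≤ t] = (qt)^m · ₂F₁(m/2, (m+1)/2; m+1; 4pqt). -/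

import Mathlib

noncomputable section

namespace GMS

/-- First passage probability: `F p q j n` = probability that a ±1 walk with up-prob `p`
first hits `-j` at time `n`. -/
def F (p q : ℝ) : ℕ → ℕ → ℝ
  | 0, 0 => 1
  | 0, _+1 => 0
  | _+1, 0 => 0
  | j+1, n+1 => q * F p q j n + p * F p q (j+2) n
  termination_by j n => n

variable {p q : ℝ}


lemma F_zero_zero : F p q 0 0 = 1 := by simp [F]
lemma F_zero_succ (n : ℕ) : F p q 0 (n+1) = 0 := by simp [F]
lemma F_succ_zero (j : ℕ) : F p q (j+1) 0 = 0 := by simp [F]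
lemma F_succ_succ (j n : ℕ) : F p q (j+1) (n+1) = q * F p q j n + p * F p q (j+2) n := by
  rw [F]

lemma F_nonneg (hp : 0 ≤ p) (hq : 0 ≤ q) : ∀ n j, 0 ≤ F p q j n := by
  intro n
  induction n with
  | zero => intro j; cases j <;> simp [F_zero_zero, F_succ_zero]
  | succ n ih =>
    intro j
    cases j with
    | zero => simp [F_zero_succ]
    | succ j =>
      rw [F_succ_succ]
      exact add_nonneg (mul_nonneg hq (ih j)) (mul_nonneg hp (ih (j+2)))

lemma F_eq_zero_of_lt : ∀ n j, n < j → F p q j n = 0 := by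
  intro n
  induction n with
  | zero => intro j hj; cases j with
    | zero => omega
    | succ j => exact F_succ_zero j
  | succ n ih =>
    intro j hj
    cases j with
    | zero => omega
    | succ j =>
      rw [F_succ_succ, ih _ (by omega), ih _ (by omega)]
      ring

lemma F_eq_zero_of_odd : ∀ n j, Odd (j + n) → F p q j n = 0 := by
  intro n
  induction n with
  | zero => intro j hj; cases j with
    | zero => simp at hj
    | succ j => exact F_succ_zero j
  | succ n ih =>
    intro j hj
    cases j with
    | zero => exact F_zero_succ n
    | succ j =>
      obtain ⟨w, hw⟩ := hj
      rw [F_succ_succ, ih j ⟨w-1, by omega⟩, ih (j+2) ⟨w, by omega⟩]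
      ring

open Polynomial

/-- Rising factorial evaluated at a real. -/
def Pe (k : ℕ) (x : ℝ) : ℝ := (ascPochhammer ℝ k).eval x

lemma Pe_zero (x : ℝ) : Pe 0 x = 1 := by simp [Pe]

lemma Pe_succ (n : ℕ) (x : ℝ) : Pe (n+1) x = Pe n x * (x + n) := by
  simp [Pe, ascPochhammer_succ_eval]

lemma Pe_succ_left (n : ℕ) (x : ℝ) :
    Pe (n+1) x = x * Pe n (x+1) := by
  simp only [Pe]
  rw [ascPochhammer_succ_left]
  simp [Polynomial.eval_comp]

lemma Pe_L1 (n : ℕ) (x : ℝ) : x * Pe n (x+1) = (x + n) * Pe n x := by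
  rw [← Pe_succ_left, Pe_succ]; ring

lemma Pe_pos {x : ℝ} (hx : 0 < x) (n : ℕ) : 0 < Pe n x :=
  ascPochhammer_pos n x hx

lemma Pe_one (n : ℕ) : Pe n 1 = (n.factorial : ℝ) := by
  simp [Pe]

lemma Pe_two (n : ℕ) : Pe n 2 = ((n+1).factorial : ℝ) := by
  have := factorial_mul_ascPochhammer ℝ 1 n
  norm_num at this
  simp only [Pe]
  rw [this]
  norm_cast
  rw [Nat.add_comm]

lemma Pe_three (n : ℕ) : 2 * Pe n 3 = ((n+2).factorial : ℝ) := by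
  have := factorial_mul_ascPochhammer ℝ 2 n
  norm_num [Nat.factorial] at this
  simp only [Pe]
  rw [this]
  norm_cast
  rw [Nat.add_comm]

lemma Pe_dup : ∀ (k : ℕ) (x : ℝ), Pe (2*k) x = 4^k * Pe k (x/2) * Pe k ((x+1)/2) := by
  intro k
  induction k with
  | zero => intro x; simp [Pe_zero]
  | succ k ih =>
    intro x
    have h1 : 2*(k+1) = (2*k+1)+1 := by omega
    rw [h1, Pe_succ, Pe_succ, ih x, Pe_succ, Pe_succ]
    push_cast
    ring

variable {p q : ℝ}


lemma F_diag : ∀ j, F p q j j = q^j := by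
  intro j
  induction j with
  | zero => simp [F_zero_zero]
  | succ j ih =>
    rw [F_succ_succ, ih, F_eq_zero_of_lt j (j+2) (by omega)]
    ring

lemma Fkey_one {k : ℕ}
    (h2 : F p q 2 (2+2*k) * (Pe k 3 * (k.factorial:ℝ)) = Pe (2*k) 2 * (p^k * q^(2+k))) :
    F p q 1 (1+2*(k+1)) * (Pe (k+1) 2 * ((k+1).factorial:ℝ))
      = Pe (2*(k+1)) 1 * (p^(k+1) * q^(1+(k+1))) := by
  have hp3 : (0:ℝ) < Pe k 3 := Pe_pos (by norm_num) k
  have h3 := Pe_three k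
  have hPe2 : Pe (k+1) 2 = ((k+2).factorial : ℝ) := by rw [Pe_two]
  have hPe1 : Pe (2*(k+1)) 1 = ((2+2*k).factorial : ℝ) := by
    rw [Pe_one]; norm_cast; congr 1; omega
  have hPe22 : Pe (2*k) 2 = ((2*k+1).factorial : ℝ) := by rw [Pe_two]
  rw [show 1+2*(k+1) = (2+2*k)+1 by omega, F_succ_succ,
    show (2+2*k) = (2*k+1)+1 by omega, F_zero_succ, hPe1, hPe2]
  rw [show (2*k+1)+1 = 2+2*k by omega]
  rw [hPe22] at h2
  have hne : Pe k 3 * (k.factorial:ℝ) ≠ 0 := by positivity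
  apply mul_right_cancel₀ hne
  have hfact2 : ((k+2).factorial : ℝ) = (k+2) * ((k+1).factorial : ℝ) := by
    rw [Nat.factorial_succ]; push_cast; ring
  have hfact1 : ((k+1).factorial : ℝ) = (k+1) * (k.factorial : ℝ) := by
    rw [Nat.factorial_succ]; push_cast; ring
  have hfact3 : ((2+2*k).factorial : ℝ) = (2*(k:ℝ)+2) * ((2*k+1).factorial : ℝ) := by
    rw [show 2+2*k = (2*k+1)+1 by omega, Nat.factorial_succ]; push_cast; ring
  calc (q * 0 + p * F p q 2 (2+2*k)) * (((k+2).factorial:ℝ) * ((k+1).factorial:ℝ))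
        * (Pe k 3 * (k.factorial:ℝ))
      = p * (((k+2).factorial:ℝ) * ((k+1).factorial:ℝ))
        * (F p q 2 (2+2*k) * (Pe k 3 * (k.factorial:ℝ))) := by ring
    _ = p * (((k+2).factorial:ℝ) * ((k+1).factorial:ℝ))
        * (((2*k+1).factorial:ℝ) * (p^k * q^(2+k))) := by rw [h2]
    _ = ((2+2*k).factorial:ℝ) * (p^(k+1) * q^(1+(k+1))) * (Pe k 3 * (k.factorial:ℝ)) := by
        rw [show Pe k 3 = ((k+2).factorial:ℝ)/2 by rw [← h3]; ring]
        rw [hfact3, hfact2, hfact1]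
        push_cast
        ring

lemma Fkey_step {k i : ℕ}
    (E1 : F p q (i+1) ((i+1)+2*(k+1)) * (Pe (k+1) (((i:ℝ)+1)+1) * ((k+1).factorial:ℝ))
      = Pe (2*(k+1)) ((i:ℝ)+1) * (p^(k+1) * q^((i+1)+(k+1))))
    (E2 : F p q (i+3) ((i+3)+2*k) * (Pe k (((i:ℝ)+1)+3) * (k.factorial:ℝ))
      = Pe (2*k) (((i:ℝ)+1)+2) * (p^k * q^((i+3)+k))) :
    F p q (i+2) ((i+2)+2*(k+1)) * (Pe (k+1) (((i:ℝ)+1)+2) * ((k+1).factorial:ℝ))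
      = Pe (2*(k+1)) (((i:ℝ)+1)+1) * (p^(k+1) * q^((i+2)+(k+1))) := by
  set x : ℝ := ((i:ℝ)+1) with hxdef
  have hx : (0:ℝ) < x := by positivity
  have hx1 : (0:ℝ) < x+1 := by positivity
  have hx2 : (0:ℝ) < x+2 := by positivity
  rw [show (i+2)+2*(k+1) = ((i+2*k+3))+1 by omega, show ((i:ℕ)+2) = (i+1)+1 by omega,
    F_succ_succ, show ((i+1)+1)+1 = i+3 by omega]
  rw [show (i+1)+2*(k+1) = i+2*k+3 by omega] at E1
  rw [show (i+3)+2*k = i+2*k+3 by omega] at E2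
  have R1 : x * Pe (2*(k+1)) (x+1) = (x + (2*(k+1) : ℕ)) * Pe (2*(k+1)) x :=
    Pe_L1 (2*(k+1)) x
  have R2 : (x+1) * Pe (k+1) ((x+1)+1) = ((x+1) + ((k+1 : ℕ):ℝ)) * Pe (k+1) (x+1) :=
    Pe_L1 (k+1) (x+1)
  have R3 : (x+2) * Pe k ((x+2)+1) = ((x+2) + (k : ℝ)) * Pe k (x+2) :=
    Pe_L1 k (x+2)
  have R4 : Pe (2*(k+1)) x = x * (x+1) * Pe (2*k) (x+2) := by
    rw [show 2*(k+1) = (2*k+1)+1 by omega, Pe_succ_left, Pe_succ_left,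
      show x+1+1 = x+2 by ring]
    ring
  have R5 : Pe (k+1) (x+1) = (x+1) * Pe k (x+2) := by
    rw [Pe_succ_left, show x+1+1 = x+2 by ring]
  have hB : (0:ℝ) < Pe k (x+2) := Pe_pos (by linarith) k
  have hkf : (0:ℝ) < (k.factorial : ℝ) := by positivity
  have hPk3 : Pe k (x+3) = ((x+2) + (k:ℝ)) * Pe k (x+2) / (x+2) := by
    rw [eq_div_iff (ne_of_gt hx2), show x+3 = (x+2)+1 by ring] at *
    linarith [R3]
  have hPk12 : Pe (k+1) (x+2) = ((x+1) + ((k+1:ℕ):ℝ)) * Pe (k+1) (x+1) / (x+1) := by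
    rw [eq_div_iff (ne_of_gt hx1)]
    rw [show (x+1)+1 = x+2 by ring] at R2
    linarith [R2]
  have hP2k1 : Pe (2*(k+1)) (x+1) = (x + ((2*(k+1):ℕ):ℝ)) * Pe (2*(k+1)) x / x := by
    rw [eq_div_iff (ne_of_gt hx)]
    linarith [R1]
  have hFa : F p q (i+1) (i+2*k+3) =
      Pe (2*(k+1)) x * (p^(k+1) * q^((i+1)+(k+1))) / (Pe (k+1) (x+1) * ((k+1).factorial:ℝ)) := by
    rw [eq_div_iff ?ha]
    · exact E1
    case ha =>
      have : (0:ℝ) < Pe (k+1) (x+1) := Pe_pos hx1 (k+1)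
      positivity
  have hFb : F p q (i+3) (i+2*k+3) =
      Pe (2*k) (x+2) * (p^k * q^((i+3)+k)) / (Pe k (x+3) * (k.factorial:ℝ)) := by
    rw [eq_div_iff ?hb]
    · exact E2
    case hb =>
      have : (0:ℝ) < Pe k (x+3) := Pe_pos (by linarith) k
      positivity
  rw [hFa, hFb, hP2k1, hPk12, hPk3, R4, R5]
  have hkf1 : ((k+1).factorial:ℝ) = (k+1) * (k.factorial:ℝ) := by
    rw [Nat.factorial_succ]; push_cast; ring
  rw [hkf1]
  push_cast
  field_simp
  ring

/-- Closed form for the first-passage probabilities. -/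
lemma Fkey : ∀ k j, F p q j (j+2*k) * (Pe k ((j:ℝ)+1) * (k.factorial : ℝ))
    = Pe (2*k) (j:ℝ) * (p^k * q^(j+k)) := by
  intro k
  induction k with
  | zero =>
    intro j
    simp [F_diag, Pe_zero]
  | succ k ih =>
    intro j
    induction j with
    | zero =>
      rw [show 0+2*(k+1) = (2*k+1)+1 by omega, F_zero_succ]
      rw [show ((2*(k+1)) : ℕ) = (2*k+1)+1 by omega]
      simp [Pe, ascPochhammer_ne_zero_eval_zero]
    | succ j ihj =>
      cases j with
      | zero =>
        have h1 := Fkey_one (p := p) (q := q) (k := k) (by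
          have := ih 2
          norm_num at this ⊢
          convert this using 3 <;> push_cast <;> ring_nf)
        norm_num at h1 ⊢
        convert h1 using 3 <;> push_cast <;> ring_nf
      | succ i =>
        have E1 : F p q (i+1) ((i+1)+2*(k+1)) * (Pe (k+1) (((i:ℝ)+1)+1) * ((k+1).factorial:ℝ))
            = Pe (2*(k+1)) ((i:ℝ)+1) * (p^(k+1) * q^((i+1)+(k+1))) := by
          convert ihj using 3 <;> push_cast <;> ring_nf
        have E2 : F p q (i+3) ((i+3)+2*k) * (Pe k (((i:ℝ)+1)+3) * (k.factorial:ℝ))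
            = Pe (2*k) (((i:ℝ)+1)+2) * (p^k * q^((i+3)+k)) := by
          have := ih (i+3)
          convert this using 3 <;> push_cast <;> ring_nf
        have h1 := Fkey_step (p := p) (q := q) E1 E2
        convert h1 using 3 <;> push_cast <;> ring_nf


lemma sigma_one
    (hp0 : 0 < p) (hple : p ≤ 1/2) (hpq : p + q = 1)
    (hbd : ∀ j N, ∑ n ∈ Finset.range N, F p q j n ≤ 1) :
    ∀ j, ∑' n, F p q j n = 1 := by
  have hq0 : 0 ≤ q := by linarith
  have hqp : p ≤ q := by linarith
  have hnn := F_nonneg (le_of_lt hp0) hq0 (p := p) (q := q)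
  have hsm : ∀ j, Summable (fun n => F p q j n) := fun j =>
    summable_of_sum_range_le (fun n => hnn n j) (hbd j)
  set σ : ℕ → ℝ := fun j => ∑' n, F p q j n with hσ
  have hσ0 : σ 0 = 1 := by
    rw [hσ]
    simp only
    rw [tsum_eq_single 0 (fun n hn => by
      cases n with
      | zero => omega
      | succ n => exact F_zero_succ n)]
    exact F_zero_zero
  have hσnn : ∀ j, 0 ≤ σ j := fun j => tsum_nonneg (fun n => hnn n j)
  have hσle : ∀ j, σ j ≤ 1 := fun j => Summable.tsum_le_of_sum_range_le (hsm j) (hbd j)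
  have hrec : ∀ j, σ (j+1) = q * σ j + p * σ (j+2) := by
    intro j
    have h1 : σ (j+1) = F p q (j+1) 0 + ∑' n, F p q (j+1) (n+1) := Summable.tsum_eq_zero_add (hsm (j+1))
    rw [F_succ_zero, zero_add] at h1
    rw [h1]
    have h2 : ∀ n, F p q (j+1) (n+1) = q * F p q j n + p * F p q (j+2) n := fun n => F_succ_succ j n
    rw [tsum_congr h2, Summable.tsum_add ((hsm j).mul_left q) ((hsm (j+2)).mul_left p),
      tsum_mul_left, tsum_mul_left]
  set d : ℕ → ℝ := fun j => σ j - σ (j+1) with hd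
  have hdrec : ∀ j, d (j+1) = (q/p) * d j := by
    intro j
    have h2 : p * d (j+1) = q * d j := by
      simp only [hd]
      linear_combination hrec j + σ (j+1) * hpq
    rw [div_mul_eq_mul_div, eq_div_iff (ne_of_gt hp0)]
    linear_combination h2
  have hdj : ∀ j, d j = (q/p)^j * d 0 := by
    intro j
    induction j with
    | zero => simp
    | succ j ih => rw [hdrec j, ih, pow_succ]; ring
  have htel : ∀ j, σ 0 - σ j = (∑ i ∈ Finset.range j, (q/p)^i) * d 0 := by
    intro j
    have := Finset.sum_range_sub' σ j
    calc σ 0 - σ j = ∑ i ∈ Finset.range j, (σ i - σ (i+1)) := by rw [this]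
      _ = ∑ i ∈ Finset.range j, (q/p)^i * d 0 := by
          apply Finset.sum_congr rfl
          intro i _
          exact hdj i
      _ = (∑ i ∈ Finset.range j, (q/p)^i) * d 0 := by rw [Finset.sum_mul]
  have hqp1 : (1:ℝ) ≤ q/p := by
    rw [le_div_iff₀ hp0]; linarith
  have hsumge : ∀ j : ℕ, (j:ℝ) ≤ ∑ i ∈ Finset.range j, (q/p)^i := by
    intro j
    calc (j:ℝ) = ∑ _i ∈ Finset.range j, (1:ℝ) := by simp
      _ ≤ _ := Finset.sum_le_sum (fun i _ => one_le_pow₀ hqp1)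
  have hd0 : d 0 = 0 := by
    by_contra hne
    rcases lt_trichotomy (d 0) 0 with hlt | heq | hgt
    · obtain ⟨j, hj⟩ := exists_nat_gt (1 / (-(d 0)))
      have h1 : σ 0 - σ j ≤ (j:ℝ) * d 0 := by
        rw [htel j]
        exact mul_le_mul_of_nonpos_right (hsumge j) hlt.le
      have : (1:ℝ) < (j:ℝ) * (-(d 0)) := by
        rw [div_lt_iff₀ (by linarith)] at hj
        linarith
      have := hσle j
      rw [hσ0] at h1
      nlinarith
    · exact hne heq
    · obtain ⟨j, hj⟩ := exists_nat_gt (1 / (d 0))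
      have h1 : (j:ℝ) * d 0 ≤ σ 0 - σ j := by
        rw [htel j]
        exact mul_le_mul_of_nonneg_right (hsumge j) hgt.le
      have : (1:ℝ) < (j:ℝ) * d 0 := by
        rw [div_lt_iff₀ hgt] at hj
        linarith
      have := hσnn j
      rw [hσ0] at h1
      nlinarith
  have hdall : ∀ j, d j = 0 := fun j => by rw [hdj j, hd0, mul_zero]
  intro j
  have : ∀ j, σ j = 1 := by
    intro j
    induction j with
    | zero => exact hσ0
    | succ j ih =>
      have := hdall j
      simp only [hd] at this
      linarith
  exact this j

section MeasureLayer

open MeasureTheory ProbabilityTheory Set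

variable {Ω : Type*} [MeasurableSpace Ω]

/-- First-passage event: the walk with steps `ξ (a+·)` first hits `-j` exactly at time `n`. -/
def FP (ξ : ℕ → Ω → ℝ) (a j n : ℕ) : Set Ω :=
  {ω | (∀ k < n, ∑ i ∈ Finset.range k, ξ (a+i) ω ≠ -(j:ℝ)) ∧
    ∑ i ∈ Finset.range n, ξ (a+i) ω = -(j:ℝ)}

/-- The corresponding set of step-vectors. -/
def pathSet (j n : ℕ) : Set (Fin n → ℝ) :=
  {v | (∀ k < n, ∑ i ∈ Finset.univ.filter (fun i : Fin n => (i:ℕ) < k), v i ≠ -(j:ℝ)) ∧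
    ∑ i, v i = -(j:ℝ)}

lemma sum_filter_lt (f : ℕ → ℝ) {k n : ℕ} (hk : k ≤ n) :
    ∑ i ∈ Finset.univ.filter (fun i : Fin n => (i:ℕ) < k), f (i:ℕ)
      = ∑ i ∈ Finset.range k, f i := by
  rw [Finset.sum_filter, Fin.sum_univ_eq_sum_range (fun i => if i < k then f i else 0) n,
    ← Finset.sum_subset (Finset.range_subset_range.mpr hk)
      (fun x _ hnx => if_neg (by simpa using hnx))]
  exact Finset.sum_congr rfl (fun x hx => if_pos (Finset.mem_range.mp hx))

lemma measurableSet_pathSet (j n : ℕ) : MeasurableSet (pathSet j n) := by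
  have h1 : ∀ s : Finset (Fin n), Measurable (fun v : Fin n → ℝ => ∑ i ∈ s, v i) :=
    fun s => Finset.measurable_sum s (fun i _ => measurable_pi_apply i)
  have : pathSet j n =
      (⋂ k ∈ Finset.range n,
        {v : Fin n → ℝ | ∑ i ∈ Finset.univ.filter (fun i : Fin n => (i:ℕ) < k), v i
          = -(j:ℝ)}ᶜ) ∩ {v : Fin n → ℝ | ∑ i, v i = -(j:ℝ)} := by
    ext v
    simp only [pathSet, Set.mem_inter_iff, Set.mem_iInter, Set.mem_compl_iff, Set.mem_setOf_eq,
      Finset.mem_range, mem_setOf_eq]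
  rw [this]
  refine MeasurableSet.inter ?_ ?_
  · exact MeasurableSet.biInter (Set.to_countable _)
      (fun k _ => ((h1 _) (measurableSet_singleton _)).compl)
  · exact (h1 Finset.univ) (measurableSet_singleton _)

lemma FP_eq_preimage (ξ : ℕ → Ω → ℝ) (a j n : ℕ) :
    FP ξ a j n = (fun ω (i : Fin n) => ξ (a+(i:ℕ)) ω) ⁻¹' pathSet j n := by
  ext ω
  simp only [FP, pathSet, Set.mem_preimage, Set.mem_setOf_eq]
  have hsum : ∀ k ≤ n, ∑ i ∈ Finset.univ.filter (fun i : Fin n => (i:ℕ) < k), ξ (a+(i:ℕ)) ω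
      = ∑ i ∈ Finset.range k, ξ (a+i) ω := fun k hk => sum_filter_lt (fun i => ξ (a+i) ω) hk
  have htot : (∑ i : Fin n, ξ (a+(i:ℕ)) ω) = ∑ i ∈ Finset.range n, ξ (a+i) ω :=
    Fin.sum_univ_eq_sum_range (fun i => ξ (a+i) ω) n
  constructor
  · rintro ⟨h1, h2⟩
    exact ⟨fun k hk => by rw [hsum k hk.le]; exact h1 k hk, by rw [htot]; exact h2⟩
  · rintro ⟨h1, h2⟩
    exact ⟨fun k hk => by rw [← hsum k hk.le]; exact h1 k hk, by rw [← htot]; exact h2⟩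

lemma measurableSet_FP {ξ : ℕ → Ω → ℝ} (hξ : ∀ i, Measurable (ξ i)) (a j n : ℕ) :
    MeasurableSet (FP ξ a j n) := by
  rw [FP_eq_preimage]
  exact MeasurableSet.preimage (measurableSet_pathSet j n)
    (measurable_pi_lambda _ (fun i => hξ (a+(i:ℕ))))

lemma FP_disjoint (ξ : ℕ → Ω → ℝ) (a j : ℕ) {n n' : ℕ} (hne : n ≠ n') :
    Disjoint (FP ξ a j n) (FP ξ a j n') := by
  rw [Set.disjoint_left]
  rintro ω ⟨h1, h2⟩ ⟨h1', h2'⟩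
  rcases Nat.lt_or_ge n n' with h | h
  · exact h1' n h h2
  · exact h1 n' (lt_of_le_of_ne h (Ne.symm hne)) h2'

variable (μ : Measure Ω) [IsProbabilityMeasure μ]
variable {p q : ℝ} {ξ Y : ℕ → Ω → ℝ}

lemma elim_meas (hξmeas : ∀ i, Measurable (ξ i)) (hYmeas : ∀ i, Measurable (Y i)) :
    ∀ i : ℕ ⊕ ℕ, Measurable (Sum.elim ξ Y i) := by
  intro i
  cases i with
  | inl a => exact hξmeas a
  | inr a => exact hYmeas a

lemma xi_up (hξmeas : ∀ i, Measurable (ξ i))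
    (hξdist : ∀ i, Measure.map (ξ i) μ =
      ENNReal.ofReal p • Measure.dirac (1 : ℝ) + ENNReal.ofReal q • Measure.dirac (-1 : ℝ))
    (a : ℕ) : μ (ξ a ⁻¹' {(1:ℝ)}) = ENNReal.ofReal p := by
  rw [← Measure.map_apply (hξmeas a) (measurableSet_singleton _), hξdist a]
  simp [Measure.dirac_apply' _ (measurableSet_singleton _)]
  norm_num

lemma xi_down (hξmeas : ∀ i, Measurable (ξ i))
    (hξdist : ∀ i, Measure.map (ξ i) μ =
      ENNReal.ofReal p • Measure.dirac (1 : ℝ) + ENNReal.ofReal q • Measure.dirac (-1 : ℝ))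
    (a : ℕ) : μ (ξ a ⁻¹' {(-1:ℝ)}) = ENNReal.ofReal q := by
  rw [← Measure.map_apply (hξmeas a) (measurableSet_singleton _), hξdist a]
  simp [Measure.dirac_apply' _ (measurableSet_singleton _)]
  norm_num

lemma xi_good (hξmeas : ∀ i, Measurable (ξ i))
    (hξdist : ∀ i, Measure.map (ξ i) μ =
      ENNReal.ofReal p • Measure.dirac (1 : ℝ) + ENNReal.ofReal q • Measure.dirac (-1 : ℝ))
    (a : ℕ) : μ ((ξ a ⁻¹' {(1:ℝ), (-1:ℝ)})ᶜ) = 0 := by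
  have : (ξ a ⁻¹' {(1:ℝ), (-1:ℝ)})ᶜ = ξ a ⁻¹' ({(1:ℝ), (-1:ℝ)}ᶜ) := by
    rw [Set.preimage_compl]
  rw [this, ← Measure.map_apply (hξmeas a)
    (MeasurableSet.compl (by measurability)), hξdist a]
  simp [Measure.dirac_apply' _ (MeasurableSet.compl (show MeasurableSet {(1:ℝ),(-1:ℝ)} by measurability))]

lemma indep_xi_block (hξmeas : ∀ i, Measurable (ξ i)) (hYmeas : ∀ i, Measurable (Y i))
    (hindep : iIndepFun (Sum.elim ξ Y) μ) (a n : ℕ) :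
    IndepFun (ξ a) (fun ω (i : Fin n) => ξ (a+1+(i:ℕ)) ω) μ := by
  classical
  set S : Finset (ℕ ⊕ ℕ) := {Sum.inl a} with hS
  set T : Finset (ℕ ⊕ ℕ) := (Finset.range n).image (fun i => Sum.inl (a+1+i)) with hT
  have hdisj : Disjoint S T := by
    rw [Finset.disjoint_left]
    intro x hx hxT
    rw [hS, Finset.mem_singleton] at hx
    subst hx
    rw [hT, Finset.mem_image] at hxT
    obtain ⟨b, _, hb⟩ := hxT
    simp only [Sum.inl.injEq] at hb
    omega
  have h := hindep.indepFun_finset S T hdisj (elim_meas hξmeas hYmeas)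
  have hg1 : Measurable (fun v : ({x // x ∈ S} → ℝ) => v ⟨Sum.inl a, by simp [hS]⟩) :=
    measurable_pi_apply _
  have hg2 : Measurable (fun (v : ({x // x ∈ T} → ℝ)) (i : Fin n) =>
      v ⟨Sum.inl (a+1+(i:ℕ)), by
        rw [hT, Finset.mem_image]
        exact ⟨(i:ℕ), Finset.mem_range.mpr i.2, rfl⟩⟩) :=
    measurable_pi_lambda _ (fun i => measurable_pi_apply _)
  have h2 := h.comp hg1 hg2
  exact h2

lemma indep_block_block (hξmeas : ∀ i, Measurable (ξ i)) (hYmeas : ∀ i, Measurable (Y i))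
    (hindep : iIndepFun (Sum.elim ξ Y) μ) (n N : ℕ) :
    IndepFun (fun ω (i : Fin n) => ξ (0+(i:ℕ)) ω) (fun ω (i : Fin N) => Y (i:ℕ) ω) μ := by
  classical
  set S : Finset (ℕ ⊕ ℕ) := (Finset.range n).image Sum.inl with hS
  set T : Finset (ℕ ⊕ ℕ) := (Finset.range N).image Sum.inr with hT
  have hdisj : Disjoint S T := by
    rw [Finset.disjoint_left]
    intro x hx hxT
    rw [hS, Finset.mem_image] at hx
    rw [hT, Finset.mem_image] at hxT
    obtain ⟨b, _, hb⟩ := hx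
    obtain ⟨c, _, hc⟩ := hxT
    rw [← hb] at hc
    exact absurd hc (by simp)
  have h := hindep.indepFun_finset S T hdisj (elim_meas hξmeas hYmeas)
  have hg1 : Measurable (fun (v : ({x // x ∈ S} → ℝ)) (i : Fin n) =>
      v ⟨Sum.inl (i:ℕ), by
        rw [hS, Finset.mem_image]
        exact ⟨(i:ℕ), Finset.mem_range.mpr i.2, rfl⟩⟩) :=
    measurable_pi_lambda _ (fun i => measurable_pi_apply _)
  have hg2 : Measurable (fun (v : ({x // x ∈ T} → ℝ)) (i : Fin N) =>
      v ⟨Sum.inr (i:ℕ), by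
        rw [hT, Finset.mem_image]
        exact ⟨(i:ℕ), Finset.mem_range.mpr i.2, rfl⟩⟩) :=
    measurable_pi_lambda _ (fun i => measurable_pi_apply _)
  have h2 := h.comp hg1 hg2
  have e1 : (fun (v : ({x // x ∈ S} → ℝ)) (i : Fin n) =>
      v ⟨Sum.inl (i:ℕ), by
        rw [hS, Finset.mem_image]; exact ⟨(i:ℕ), Finset.mem_range.mpr i.2, rfl⟩⟩)
      ∘ (fun a (i : {x // x ∈ S}) => Sum.elim ξ Y (i:ℕ⊕ℕ) a)
      = fun ω (i : Fin n) => ξ (0+(i:ℕ)) ω := by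
    funext ω i
    simp
  have e2 : (fun (v : ({x // x ∈ T} → ℝ)) (i : Fin N) =>
      v ⟨Sum.inr (i:ℕ), by
        rw [hT, Finset.mem_image]; exact ⟨(i:ℕ), Finset.mem_range.mpr i.2, rfl⟩⟩)
      ∘ (fun a (i : {x // x ∈ T}) => Sum.elim ξ Y (i:ℕ⊕ℕ) a)
      = fun ω (i : Fin N) => Y (i:ℕ) ω := by
    funext ω i
    simp
  rw [e1, e2] at h2
  exact h2

lemma measFP_rec (hξmeas : ∀ i, Measurable (ξ i)) (hYmeas : ∀ i, Measurable (Y i))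
    (hindep : iIndepFun (Sum.elim ξ Y) μ)
    (hξdist : ∀ i, Measure.map (ξ i) μ =
      ENNReal.ofReal p • Measure.dirac (1 : ℝ) + ENNReal.ofReal q • Measure.dirac (-1 : ℝ))
    (a j n : ℕ) :
    μ (FP ξ a (j+1) (n+1)) =
      ENNReal.ofReal q * μ (FP ξ (a+1) j n) + ENNReal.ofReal p * μ (FP ξ (a+1) (j+2) n) := by
  classical
  set G : Set Ω := ξ a ⁻¹' {(1:ℝ), (-1:ℝ)} with hG
  have hdec : ∀ ω k, ∑ i ∈ Finset.range (k+1), ξ (a+i) ω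
      = ξ a ω + ∑ i ∈ Finset.range k, ξ (a+1+i) ω := by
    intro ω k
    rw [Finset.sum_range_succ' (fun i => ξ (a+i) ω) k]
    rw [show a+0 = a by omega, add_comm]
    congr 1
    refine Finset.sum_congr rfl (fun i _ => ?_)
    congr 1
    omega
  have hset : FP ξ a (j+1) (n+1) ∩ G =
      (ξ a ⁻¹' {(-1:ℝ)} ∩ FP ξ (a+1) j n) ∪ (ξ a ⁻¹' {(1:ℝ)} ∩ FP ξ (a+1) (j+2) n) := by
    ext ω
    simp only [FP, Set.mem_inter_iff, Set.mem_union, Set.mem_setOf_eq, Set.mem_preimage,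
      Set.mem_insert_iff, Set.mem_singleton_iff, hG]
    constructor
    · rintro ⟨⟨h1, h2⟩, hg⟩
      rcases hg with hup | hdown
      · right
        refine ⟨hup, fun k hk => ?_, ?_⟩
        · have := h1 (k+1) (by omega)
          rw [hdec ω k, hup] at this
          intro hc
          apply this
          rw [hc]
          push_cast
          ring
        · have := h2
          rw [hdec ω n, hup] at this
          push_cast at this ⊢
          linarith
      · left
        refine ⟨hdown, fun k hk => ?_, ?_⟩
        · have := h1 (k+1) (by omega)
          rw [hdec ω k, hdown] at this
          intro hc
          apply this
          rw [hc]
          push_cast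
          ring
        · have := h2
          rw [hdec ω n, hdown] at this
          push_cast at this ⊢
          linarith
    · rintro (⟨hval, h1, h2⟩ | ⟨hval, h1, h2⟩)
      · refine ⟨⟨fun k hk => ?_, ?_⟩, Or.inr hval⟩
        · cases k with
          | zero =>
            simp only [Finset.range_zero, Finset.sum_empty]
            intro hc
            have : ((j:ℝ)+1) = 0 := by push_cast at hc; linarith
            have : (0:ℝ) < (j:ℝ)+1 := by positivity
            linarith
          | succ k =>
            rw [hdec ω k, hval]
            have := h1 k (by omega)
            intro hc
            apply this
            push_cast at hc ⊢
            linarith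
        · rw [hdec ω n, hval]
          push_cast at h2 ⊢
          linarith
      · refine ⟨⟨fun k hk => ?_, ?_⟩, Or.inl hval⟩
        · cases k with
          | zero =>
            simp only [Finset.range_zero, Finset.sum_empty]
            intro hc
            have : ((j:ℝ)+1) = 0 := by push_cast at hc; linarith
            have : (0:ℝ) < (j:ℝ)+1 := by positivity
            linarith
          | succ k =>
            rw [hdec ω k, hval]
            have := h1 k (by omega)
            intro hc
            apply this
            push_cast at hc ⊢
            linarith
        · rw [hdec ω n, hval]
          push_cast at h2 ⊢
          linarith
  have h0 : μ (FP ξ a (j+1) (n+1)) = μ (FP ξ a (j+1) (n+1) ∩ G) :=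
    (measure_inter_conull (xi_good μ hξmeas hξdist a)).symm
  have hdisj : Disjoint (ξ a ⁻¹' {(-1:ℝ)} ∩ FP ξ (a+1) j n)
      (ξ a ⁻¹' {(1:ℝ)} ∩ FP ξ (a+1) (j+2) n) := by
    rw [Set.disjoint_left]
    rintro ω ⟨h1, _⟩ ⟨h2, _⟩
    simp only [Set.mem_preimage, Set.mem_singleton_iff] at h1 h2
    rw [h1] at h2
    norm_num at h2
  have hmeas2 : MeasurableSet (ξ a ⁻¹' {(1:ℝ)} ∩ FP ξ (a+1) (j+2) n) :=
    ((hξmeas a) (measurableSet_singleton _)).inter (measurableSet_FP hξmeas _ _ _)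
  rw [h0, hset, measure_union hdisj hmeas2]
  have hI := indep_xi_block μ hξmeas hYmeas hindep a n
  have e1 : μ (ξ a ⁻¹' {(-1:ℝ)} ∩ FP ξ (a+1) j n)
      = ENNReal.ofReal q * μ (FP ξ (a+1) j n) := by
    rw [FP_eq_preimage ξ (a+1) j n]
    rw [hI.measure_inter_preimage_eq_mul _ _ (measurableSet_singleton _) (measurableSet_pathSet _ _)]
    rw [xi_down μ hξmeas hξdist a]
  have e2 : μ (ξ a ⁻¹' {(1:ℝ)} ∩ FP ξ (a+1) (j+2) n)
      = ENNReal.ofReal p * μ (FP ξ (a+1) (j+2) n) := by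
    rw [FP_eq_preimage ξ (a+1) (j+2) n]
    rw [hI.measure_inter_preimage_eq_mul _ _ (measurableSet_singleton _) (measurableSet_pathSet _ _)]
    rw [xi_up μ hξmeas hξdist a]
  rw [e1, e2]

lemma measFP (hp0 : 0 ≤ p) (hq0 : 0 ≤ q)
    (hξmeas : ∀ i, Measurable (ξ i)) (hYmeas : ∀ i, Measurable (Y i))
    (hindep : iIndepFun (Sum.elim ξ Y) μ)
    (hξdist : ∀ i, Measure.map (ξ i) μ =
      ENNReal.ofReal p • Measure.dirac (1 : ℝ) + ENNReal.ofReal q • Measure.dirac (-1 : ℝ)) :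
    ∀ n j a, μ (FP ξ a j n) = ENNReal.ofReal (F p q j n) := by
  intro n
  induction n with
  | zero =>
    intro j a
    cases j with
    | zero =>
      have : FP ξ a 0 0 = Set.univ := by
        ext ω
        simp [FP]
      rw [this, F_zero_zero, measure_univ, ENNReal.ofReal_one]
    | succ j =>
      have : FP ξ a (j+1) 0 = ∅ := by
        ext ω
        simp only [FP, Set.mem_setOf_eq, Set.mem_empty_iff_false, iff_false, not_and]
        intro _
        simp only [Finset.range_zero, Finset.sum_empty]
        intro hc
        have h1 : (0:ℝ) < (j:ℝ)+1 := by positivity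
        push_cast at hc
        linarith
      rw [this, F_succ_zero, measure_empty, ENNReal.ofReal_zero]
  | succ n ih =>
    intro j a
    cases j with
    | zero =>
      have : FP ξ a 0 (n+1) = ∅ := by
        ext ω
        simp only [FP, Set.mem_setOf_eq, Set.mem_empty_iff_false, iff_false, not_and]
        intro h1
        have := h1 0 (by omega)
        simp at this
      rw [this, F_zero_succ, measure_empty, ENNReal.ofReal_zero]
    | succ j =>
      rw [measFP_rec μ hξmeas hYmeas hindep hξdist a j n, ih j (a+1), ih (j+2) (a+1),
        F_succ_succ, ← ENNReal.ofReal_mul hq0, ← ENNReal.ofReal_mul hp0,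
        ← ENNReal.ofReal_add (by exact mul_nonneg hq0 (F_nonneg hp0 hq0 n j))
          (mul_nonneg hp0 (F_nonneg hp0 hq0 n (j+2)))]

lemma sum_F_le_one (hp0 : 0 ≤ p) (hq0 : 0 ≤ q)
    (hξmeas : ∀ i, Measurable (ξ i)) (hYmeas : ∀ i, Measurable (Y i))
    (hindep : iIndepFun (Sum.elim ξ Y) μ)
    (hξdist : ∀ i, Measure.map (ξ i) μ =
      ENNReal.ofReal p • Measure.dirac (1 : ℝ) + ENNReal.ofReal q • Measure.dirac (-1 : ℝ)) :
    ∀ j N, ∑ n ∈ Finset.range N, F p q j n ≤ 1 := by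
  intro j N
  have h1 : μ (⋃ n ∈ Finset.range N, FP ξ 0 j n)
      = ∑ n ∈ Finset.range N, μ (FP ξ 0 j n) := by
    refine measure_biUnion_finset ?_ (fun n _ => measurableSet_FP hξmeas _ _ _)
    intro n _ n' _ hne
    exact FP_disjoint ξ 0 j hne
  rw [Finset.sum_congr rfl
    (fun n _ => measFP μ hp0 hq0 hξmeas hYmeas hindep hξdist n j 0)] at h1
  rw [← ENNReal.ofReal_sum_of_nonneg (fun n _ => F_nonneg hp0 hq0 n j)] at h1
  have h2 : μ (⋃ n ∈ Finset.range N, FP ξ 0 j n) ≤ 1 := prob_le_one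
  rw [h1] at h2
  exact ENNReal.ofReal_le_one.mp h2

lemma hit_as (hp0 : 0 < p) (hple : p ≤ 1/2) (hpq : p + q = 1)
    (hξmeas : ∀ i, Measurable (ξ i)) (hYmeas : ∀ i, Measurable (Y i))
    (hindep : iIndepFun (Sum.elim ξ Y) μ)
    (hξdist : ∀ i, Measure.map (ξ i) μ =
      ENNReal.ofReal p • Measure.dirac (1 : ℝ) + ENNReal.ofReal q • Measure.dirac (-1 : ℝ))
    (m : ℕ) :
    μ ((⋃ n, FP ξ 0 m n)ᶜ) = 0 := by
  have hq0 : 0 ≤ q := by linarith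
  have hone : μ (⋃ n, FP ξ 0 m n) = 1 := by
    rw [measure_iUnion (fun n n' hne => FP_disjoint ξ 0 m hne)
      (fun n => measurableSet_FP hξmeas _ _ _)]
    rw [tsum_congr (fun n => measFP μ hp0.le hq0 hξmeas hYmeas hindep hξdist n m 0)]
    have hsm : Summable (fun n => F p q m n) :=
      summable_of_sum_range_le (fun n => F_nonneg hp0.le hq0 n m)
        (fun N => sum_F_le_one μ hp0.le hq0 hξmeas hYmeas hindep hξdist m N)
    rw [← ENNReal.ofReal_tsum_of_nonneg (fun n => F_nonneg hp0.le hq0 n m) hsm]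
    rw [sigma_one hp0 hple hpq
      (fun j N => sum_F_le_one μ hp0.le hq0 hξmeas hYmeas hindep hξdist j N) m]
    exact ENNReal.ofReal_one
  rw [measure_compl (MeasurableSet.iUnion (fun n => measurableSet_FP hξmeas _ _ _))
    (by simp), hone, measure_univ]
  simp

/-- The event that the first `N` uniforms are all at most `t`. -/
def YE (Y : ℕ → Ω → ℝ) (t : ℝ) (N : ℕ) : Set Ω :=
  ⋂ i ∈ Finset.range N, Y i ⁻¹' (Set.Iic t)

lemma measYE (hYmeas : ∀ i, Measurable (Y i))
    (hindep : iIndepFun (Sum.elim ξ Y) μ)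
    (hYdist : ∀ i, Measure.map (Y i) μ = volume.restrict (Set.Icc (0 : ℝ) 1))
    {t : ℝ} (ht0 : 0 ≤ t) (ht1 : t < 1) (N : ℕ) :
    μ (YE Y t N) = (ENNReal.ofReal t)^N := by
  classical
  have hYi : ∀ i, μ (Y i ⁻¹' Set.Iic t) = ENNReal.ofReal t := by
    intro i
    rw [← Measure.map_apply (hYmeas i) measurableSet_Iic, hYdist i,
      Measure.restrict_apply measurableSet_Iic]
    have : Set.Iic t ∩ Set.Icc 0 1 = Set.Icc 0 t := by
      ext x
      simp only [Set.mem_inter_iff, Set.mem_Iic, Set.mem_Icc]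
      constructor
      · rintro ⟨hx1, hx2, _⟩; exact ⟨hx2, hx1⟩
      · rintro ⟨h0, h1⟩; exact ⟨h1, h0, le_trans h1 ht1.le⟩
    rw [this, Real.volume_Icc]
    norm_num
  set sets : (ℕ ⊕ ℕ) → Set ℝ := Sum.elim (fun _ => Set.univ) (fun _ => Set.Iic t) with hsets
  have hmeas : ∀ i : ℕ ⊕ ℕ, i ∈ (Finset.range N).image Sum.inr → MeasurableSet (sets i) := by
    rintro (i | i) _
    · exact MeasurableSet.univ
    · exact measurableSet_Iic
  have h := hindep.measure_inter_preimage_eq_mul ((Finset.range N).image Sum.inr) hmeas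
  have hleft : (⋂ i ∈ (Finset.range N).image Sum.inr, Sum.elim ξ Y i ⁻¹' sets i)
      = YE Y t N := by
    rw [show ((Finset.range N).image Sum.inr : Finset (ℕ ⊕ ℕ)) = (Finset.range N).image Sum.inr
      from rfl]
    ext ω
    simp only [Set.mem_iInter, Finset.mem_image, YE, Set.mem_preimage, Finset.mem_range]
    constructor
    · intro h i hi
      exact h (Sum.inr i) ⟨i, hi, rfl⟩
    · rintro h x ⟨i, hi, rfl⟩
      exact h i hi
  have hright : ∏ i ∈ (Finset.range N).image Sum.inr, μ (Sum.elim ξ Y i ⁻¹' sets i)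
      = (ENNReal.ofReal t)^N := by
    rw [Finset.prod_image (fun x _ y _ h => Sum.inr_injective h)]
    calc ∏ i ∈ Finset.range N, μ (Y i ⁻¹' Set.Iic t)
        = ∏ _i ∈ Finset.range N, ENNReal.ofReal t :=
          Finset.prod_congr rfl (fun i _ => hYi i)
      _ = (ENNReal.ofReal t)^N := by rw [Finset.prod_const, Finset.card_range]
  rw [hleft, hright] at h
  exact h

/-- The set of `Y`-vectors componentwise at most `t`. -/
def YEset (t : ℝ) (N : ℕ) : Set (Fin N → ℝ) := {v | ∀ i, v i ≤ t}

lemma measurableSet_YEset (t : ℝ) (N : ℕ) : MeasurableSet (YEset t N) := by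
  have : YEset t N = ⋂ i : Fin N, (fun v : Fin N → ℝ => v i) ⁻¹' Set.Iic t := by
    ext v
    simp [YEset]
  rw [this]
  exact MeasurableSet.iInter (fun i => (measurable_pi_apply i) measurableSet_Iic)

lemma YE_eq_preimage (t : ℝ) (N : ℕ) :
    YE Y t N = (fun ω (i : Fin N) => Y (i:ℕ) ω) ⁻¹' YEset t N := by
  ext ω
  simp only [YE, YEset, Set.mem_iInter, Set.mem_preimage, Finset.mem_range, Set.mem_setOf_eq,
    Set.mem_Iic]
  constructor
  · intro h i
    exact h i i.2
  · intro h i hi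
    exact h ⟨i, hi⟩

lemma measJoint (hξmeas : ∀ i, Measurable (ξ i)) (hYmeas : ∀ i, Measurable (Y i))
    (hindep : iIndepFun (Sum.elim ξ Y) μ)
    (hYdist : ∀ i, Measure.map (Y i) μ = volume.restrict (Set.Icc (0 : ℝ) 1))
    {t : ℝ} (ht0 : 0 ≤ t) (ht1 : t < 1) (m n N : ℕ) :
    μ (FP ξ 0 m n ∩ YE Y t N) = μ (FP ξ 0 m n) * (ENNReal.ofReal t)^N := by
  have hI := indep_block_block μ hξmeas hYmeas hindep n N
  rw [FP_eq_preimage ξ 0 m n, YE_eq_preimage t N]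
  rw [hI.measure_inter_preimage_eq_mul _ _ (measurableSet_pathSet _ _)
    (measurableSet_YEset _ _)]
  rw [← YE_eq_preimage t N, measYE μ hYmeas hindep hYdist ht0 ht1 N]

lemma measurableSet_YE (hYmeas : ∀ i, Measurable (Y i)) (t : ℝ) (N : ℕ) :
    MeasurableSet (YE Y t N) := by
  rw [YE_eq_preimage]
  exact MeasurableSet.preimage (measurableSet_YEset t N)
    (measurable_pi_lambda _ (fun i => hYmeas (i:ℕ)))

lemma sup_le_iff_forall (Y : ℕ → Ω → ℝ) (ω : Ω) (N : ℕ) {t : ℝ} (ht0 : 0 ≤ t) :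
    (⨆ i ∈ Finset.range N, Y i ω) ≤ t ↔ ∀ i < N, Y i ω ≤ t := by
  classical
  set f : ℕ → ℝ := fun i => ⨆ (_ : i ∈ Finset.range N), Y i ω with hf
  have hzero : ∀ i, i ∉ Finset.range N → f i = 0 := by
    intro i hi
    haveI : IsEmpty (i ∈ Finset.range N) := ⟨fun h => hi h⟩
    exact Real.iSup_of_isEmpty _
  have hval : ∀ i, i ∈ Finset.range N → f i = Y i ω := by
    intro i hi
    simp only [hf]
    rw [ciSup_pos hi]
  have hbdd : BddAbove (Set.range f) := by
    apply BddAbove.mono (show Set.range f ⊆ insert 0 (f '' ↑(Finset.range N)) from ?_)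
    · exact (((Finset.range N).finite_toSet.image f).insert 0).bddAbove
    · rintro _ ⟨i, rfl⟩
      by_cases hi : i ∈ Finset.range N
      · exact Set.mem_insert_of_mem _ ⟨i, hi, rfl⟩
      · rw [hzero i hi]
        exact Set.mem_insert _ _
  constructor
  · intro h i hi
    have h1 : f i ≤ ⨆ i, f i := le_ciSup hbdd i
    rw [hval i (Finset.mem_range.mpr hi)] at h1
    exact h1.trans h
  · intro h
    refine ciSup_le (fun i => ?_)
    by_cases hi : i ∈ Finset.range N
    · rw [hval i hi]
      exact h i (Finset.mem_range.mp hi)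
    · rw [hzero i hi]
      exact ht0

end MeasureLayer

end GMS


open MeasureTheory ProbabilityTheory GMS

/-- **Fitness of the strongest individual in the subcritical GMS(m) model.**
Let `m ≥ 1`, `p ∈ (0, 1/2]`, `q = 1-p`, `t ∈ [0,1)`.  Let `(ξ i)` be i.i.d. `±1` steps with
`P(ξ i = 1) = p`, `P(ξ i = -1) = q`, `S n = ξ 0 + ⋯ + ξ (n-1)`,
`T = inf {n ≥ 1 : S n = -m}`, and `(Y i)` i.i.d. uniform on `[0,1]`, independent of `(ξ i)`.
With `Z = max of the first (T+m)/2 of the Y's`, one has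
`P[Z ≤ t] = (qt)^m ∑_{k≥0} (m/2)_k ((m+1)/2)_k / ((m+1)_k k!) (4pqt)^k`. -/
theorem gms_strongest_fitness_cdf
    {Ω : Type*} [MeasurableSpace Ω] (μ : Measure Ω) [IsProbabilityMeasure μ]
    (m : ℕ) (hm : 1 ≤ m)
    (p : ℝ) (hp0 : 0 < p) (hp : p ≤ 1 / 2) (q : ℝ) (hq : q = 1 - p)
    (ξ Y : ℕ → Ω → ℝ)
    (hξmeas : ∀ i, Measurable (ξ i)) (hYmeas : ∀ i, Measurable (Y i))
    (hindep : iIndepFun (Sum.elim ξ Y) μ)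
    (hξdist : ∀ i, Measure.map (ξ i) μ =
      ENNReal.ofReal p • Measure.dirac (1 : ℝ) + ENNReal.ofReal q • Measure.dirac (-1 : ℝ))
    (hYdist : ∀ i, Measure.map (Y i) μ = volume.restrict (Set.Icc (0 : ℝ) 1))
    (S : ℕ → Ω → ℝ) (hS : ∀ n ω, S n ω = ∑ i ∈ Finset.range n, ξ i ω)
    (T : Ω → ℕ) (hT : ∀ ω, T ω = sInf {n : ℕ | 1 ≤ n ∧ S n ω = -(m : ℝ)})
    (Z : Ω → ℝ) (hZ : ∀ ω, Z ω = ⨆ i ∈ Finset.range ((T ω + m) / 2), Y i ω)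
    (t : ℝ) (ht0 : 0 ≤ t) (ht1 : t < 1) :
    μ {ω | Z ω ≤ t} =
      ENNReal.ofReal ((q * t) ^ m * ∑' k : ℕ,
        (ascPochhammer ℝ k).eval ((m : ℝ) / 2) * (ascPochhammer ℝ k).eval (((m : ℝ) + 1) / 2) /
            ((ascPochhammer ℝ k).eval ((m : ℝ) + 1) * (Nat.factorial k : ℝ)) *
          (4 * p * q * t) ^ k) := by
  classical
  have hpq : p + q = 1 := by rw [hq]; ring
  have hq0 : 0 ≤ q := by rw [hq]; linarith
  -- Step 1: on the first-passage event at time n, T = n, so {Z ≤ t} matches the Y-event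
  have key1 : ∀ n, {ω | Z ω ≤ t} ∩ FP ξ 0 m n = FP ξ 0 m n ∩ YE Y t ((n+m)/2) := by
    intro n
    cases n with
    | zero =>
      have : FP ξ 0 m (0:ℕ) = (∅ : Set Ω) := by
        ext ω
        simp only [FP, Set.mem_setOf_eq, Set.mem_empty_iff_false, iff_false, not_and]
        intro _
        simp only [Finset.range_zero, Finset.sum_empty]
        intro hc
        have h1 : (0:ℝ) < (m:ℝ) := by
          have : (1:ℝ) ≤ (m:ℝ) := by exact_mod_cast hm
          linarith
        linarith [hc]
      rw [this, Set.inter_empty, Set.empty_inter]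
    | succ n' =>
      set n := n' + 1
      ext ω
      simp only [Set.mem_inter_iff, Set.mem_setOf_eq]
      constructor
      · rintro ⟨hZt, hFP⟩
        refine ⟨hFP, ?_⟩
        -- T ω = n
        have hTn : T ω = n := by
          have hS' : ∀ k, S k ω = ∑ i ∈ Finset.range k, ξ (0+i) ω := by
            intro k
            rw [hS]
            exact Finset.sum_congr rfl (fun i _ => by rw [Nat.zero_add])
          obtain ⟨h1, h2⟩ := hFP
          have hmem : n ∈ {k : ℕ | 1 ≤ k ∧ S k ω = -(m:ℝ)} := ⟨by omega, by rw [hS']; exact h2⟩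
          have hmin : ∀ b ∈ {k : ℕ | 1 ≤ k ∧ S k ω = -(m:ℝ)}, n ≤ b := by
            rintro b ⟨hb1, hb2⟩
            by_contra hbn
            exact h1 b (by omega) (by rw [← hS']; exact hb2)
          rw [hT]
          exact le_antisymm (Nat.sInf_le hmem) (le_csInf ⟨n, hmem⟩ hmin)
        rw [hZ, hTn] at hZt
        rw [sup_le_iff_forall Y ω ((n+m)/2) ht0] at hZt
        simp only [YE, Set.mem_iInter, Set.mem_preimage, Finset.mem_range, Set.mem_Iic]
        exact fun i hi => hZt i hi
      · rintro ⟨hFP, hYE⟩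
        refine ⟨?_, hFP⟩
        have hTn : T ω = n := by
          have hS' : ∀ k, S k ω = ∑ i ∈ Finset.range k, ξ (0+i) ω := by
            intro k
            rw [hS]
            exact Finset.sum_congr rfl (fun i _ => by rw [Nat.zero_add])
          obtain ⟨h1, h2⟩ := hFP
          have hmem : n ∈ {k : ℕ | 1 ≤ k ∧ S k ω = -(m:ℝ)} := ⟨by omega, by rw [hS']; exact h2⟩
          have hmin : ∀ b ∈ {k : ℕ | 1 ≤ k ∧ S k ω = -(m:ℝ)}, n ≤ b := by
            rintro b ⟨hb1, hb2⟩
            by_contra hbn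
            exact h1 b (by omega) (by rw [← hS']; exact hb2)
          rw [hT]
          exact le_antisymm (Nat.sInf_le hmem) (le_csInf ⟨n, hmem⟩ hmin)
        rw [hZ, hTn, sup_le_iff_forall Y ω ((n+m)/2) ht0]
        simp only [YE, Set.mem_iInter, Set.mem_preimage, Finset.mem_range, Set.mem_Iic] at hYE
        exact fun i hi => hYE i hi
  -- Step 2: reduce to the disjoint union
  set U : Set Ω := ⋃ n, (FP ξ 0 m n ∩ YE Y t ((n+m)/2)) with hU
  have hmuU : μ {ω | Z ω ≤ t} = μ U := by
    apply le_antisymm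
    · have hsub : {ω | Z ω ≤ t} ⊆ U ∪ (⋃ n, FP ξ 0 m n)ᶜ := by
        intro ω hω
        by_cases hhit : ω ∈ ⋃ n, FP ξ 0 m n
        · obtain ⟨_, ⟨n, rfl⟩, hωn⟩ := hhit
          left
          have : ω ∈ {ω | Z ω ≤ t} ∩ FP ξ 0 m n := ⟨hω, hωn⟩
          rw [key1 n] at this
          exact Set.mem_iUnion.mpr ⟨n, this⟩
        · exact Or.inr hhit
      calc μ {ω | Z ω ≤ t} ≤ μ (U ∪ (⋃ n, FP ξ 0 m n)ᶜ) := measure_mono hsub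
        _ ≤ μ U + μ ((⋃ n, FP ξ 0 m n)ᶜ) := measure_union_le _ _
        _ = μ U := by
            rw [hit_as μ hp0 hp hpq hξmeas hYmeas hindep hξdist m, add_zero]
    · apply measure_mono
      rw [hU]
      refine Set.iUnion_subset (fun n => ?_)
      intro ω hω
      rw [← key1 n] at hω
      exact hω.1
  -- Step 3: compute μ U
  have hmeasInter : ∀ n, MeasurableSet (FP ξ 0 m n ∩ YE Y t ((n+m)/2)) :=
    fun n => (measurableSet_FP hξmeas _ _ _).inter (measurableSet_YE hYmeas t _)
  have hdisjU : Pairwise (Function.onFun Disjoint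
      (fun n => FP ξ 0 m n ∩ YE Y t ((n+m)/2))) := by
    intro n n' hne
    exact Disjoint.mono Set.inter_subset_left Set.inter_subset_left
      (FP_disjoint ξ 0 m hne)
  set g : ℕ → ENNReal := fun n => ENNReal.ofReal (F p q m n) * (ENNReal.ofReal t)^((n+m)/2)
    with hg
  have hmuU2 : μ U = ∑' n, g n := by
    rw [hU, measure_iUnion hdisjU hmeasInter]
    refine tsum_congr (fun n => ?_)
    rw [measJoint μ hξmeas hYmeas hindep hYdist ht0 ht1 m n ((n+m)/2),
      measFP μ hp0.le hq0 hξmeas hYmeas hindep hξdist n m 0]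
  -- Step 4: reindex the sum over n = m + 2k
  have hinj : Function.Injective (fun k : ℕ => m + 2*k) := by
    intro a b hab
    dsimp at hab
    omega
  have hreindex : ∑' n, g n = ∑' k, g (m + 2*k) := by
    refine (Function.Injective.tsum_eq hinj ?_).symm
    intro n hn
    by_contra hc
    refine hn ?_
    have hFz : F p q m n = 0 := by
      rcases Nat.lt_or_ge n m with h | h
      · exact F_eq_zero_of_lt n m h
      · refine F_eq_zero_of_odd n m ?_
        rcases Nat.even_or_odd (m + n) with ⟨w, hw⟩ | ho
        · exact absurd (Set.mem_range.mpr ⟨w - m, show m + 2*(w - m) = n by omega⟩) hc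
        · exact ho
    simp only [hg, Function.mem_support, hFz, ENNReal.ofReal_zero, zero_mul, ne_eq,
      not_true_eq_false, not_not]
  -- Step 5: identify each term with the hypergeometric term
  have hD : ∀ k : ℕ, Pe k ((m:ℝ)+1) * (k.factorial : ℝ) ≠ 0 := by
    intro k
    have h1 : (0:ℝ) < Pe k ((m:ℝ)+1) := Pe_pos (by positivity) k
    positivity
  have hterm : ∀ k : ℕ, F p q m (m + 2*k) * t^(m+k) =
      (q * t) ^ m *
        (Pe k ((m:ℝ)/2) * Pe k (((m:ℝ)+1)/2) / (Pe k ((m:ℝ)+1) * (k.factorial : ℝ)) *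
          (4*p*q*t)^k) := by
    intro k
    have hF : F p q m (m + 2*k) =
        Pe (2*k) (m:ℝ) * (p^k * q^(m+k)) / (Pe k ((m:ℝ)+1) * (k.factorial : ℝ)) := by
      rw [eq_div_iff (hD k)]
      exact Fkey k m
    rw [hF, Pe_dup k (m:ℝ)]
    field_simp
    ring
  have hFsum : Summable (fun k => F p q m (m + 2*k)) := by
    have hsm : Summable (fun n => F p q m n) :=
      summable_of_sum_range_le (fun n => F_nonneg hp0.le hq0 n m)
        (fun N => sum_F_le_one μ hp0.le hq0 hξmeas hYmeas hindep hξdist m N)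
    exact hsm.comp_injective (fun k k' h => by omega)
  have hsum2 : Summable (fun k => F p q m (m + 2*k) * t^(m+k)) := by
    refine Summable.of_nonneg_of_le
      (fun k => mul_nonneg (F_nonneg hp0.le hq0 _ m) (by positivity)) (fun k => ?_) hFsum
    have h1 : t^(m+k) ≤ 1 := pow_le_one₀ ht0 ht1.le
    have h2 : 0 ≤ F p q m (m + 2*k) := F_nonneg hp0.le hq0 _ m
    nlinarith
  have hstep : ∑' k, g (m + 2*k) = ENNReal.ofReal ((q * t) ^ m * ∑' k : ℕ,
      Pe k ((m:ℝ)/2) * Pe k (((m:ℝ)+1)/2) / (Pe k ((m:ℝ)+1) * (k.factorial : ℝ)) *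
        (4*p*q*t)^k) := by
    have e1 : ∀ k, g (m + 2*k) = ENNReal.ofReal (F p q m (m + 2*k) * t^(m+k)) := by
      intro k
      rw [hg]
      simp only
      rw [show ((m + 2*k) + m)/2 = m + k by omega,
        ← ENNReal.ofReal_pow ht0, ← ENNReal.ofReal_mul (F_nonneg hp0.le hq0 _ m)]
    rw [tsum_congr e1, ← ENNReal.ofReal_tsum_of_nonneg
      (fun k => mul_nonneg (F_nonneg hp0.le hq0 _ m) (by positivity)) hsum2]
    congr 1
    rw [tsum_congr hterm, tsum_mul_left]
  rw [hmuU, hmuU2, hreindex, hstep]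
  rfl
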